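/- If the formal power series u(w) over ℝ has zero constant term and satisfies u = (A + B·u²)·w with A ≠ 0, then u is uniquely determined: its coefficient of w^{2n+1} is c_n A^{n+1} B^n and its even-degree coefficients vanish. -/

import Mathlib

open Finset

theorem formal_solution_unique
    (A B : ℝ) (hA : A ≠ 0) (u : PowerSeries ℝ)
    (h0 : PowerSeries.coeff 0 u = 0)
    (heq : u = (PowerSeries.C A + PowerSeries.C B * u ^ 2) * PowerSeries.X) :
    (∀ n : ℕ, PowerSeries.coeff (2 * n + 1) u =
      (catalan n : ℝ) * A ^ (n + 1) * B ^ n) ∧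
    (∀ n : ℕ, PowerSeries.coeff (2 * n) u = 0) := by
  have hrec : ∀ k : ℕ, PowerSeries.coeff (k + 1) u =
      (if k = 0 then A else 0) + B * PowerSeries.coeff k (u * u) := by
    intro k
    conv_lhs => rw [heq]
    rw [PowerSeries.coeff_succ_mul_X, map_add, PowerSeries.coeff_C,
      PowerSeries.coeff_C_mul, sq]
  have key : ∀ n : ℕ, PowerSeries.coeff (2 * n) u = 0 ∧
      PowerSeries.coeff (2 * n + 1) u = (catalan n : ℝ) * A ^ (n + 1) * B ^ n := by
    intro n
    induction n using Nat.strong_induction_on with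
    | _ n ih =>
      match n with
      | 0 =>
        refine ⟨by simpa using h0, ?_⟩
        have h1 := hrec 0
        rw [PowerSeries.coeff_mul] at h1
        simp [h0] at h1
        simpa using h1
      | m + 1 =>
        constructor
        · -- even coefficient vanishes
          have h1 : PowerSeries.coeff (2 * (m + 1)) u =
              B * PowerSeries.coeff (2 * m + 1) (u * u) := by
            rw [show 2 * (m + 1) = (2 * m + 1) + 1 from by ring, hrec]
            simp
          rw [h1, PowerSeries.coeff_mul,
            Finset.Nat.sum_antidiagonal_eq_sum_range_succ_mk]
          rw [Finset.sum_eq_zero, mul_zero]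
          intro k hk
          simp only [mem_range] at hk
          rcases Nat.even_or_odd k with ⟨a, ha⟩ | ⟨a, ha⟩
          · have : PowerSeries.coeff k u = 0 := by
              rw [show k = 2 * a from by omega]
              exact (ih a (by omega)).1
            rw [this, zero_mul]
          · have : PowerSeries.coeff (2 * m + 1 - k) u = 0 := by
              rw [show 2 * m + 1 - k = 2 * (m - a) from by omega]
              exact (ih (m - a) (by omega)).1
            rw [this, mul_zero]
        · -- odd coefficient
          have h1 : PowerSeries.coeff (2 * (m + 1) + 1) u =
              B * PowerSeries.coeff (2 * m + 2) (u * u) := by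
            rw [show 2 * (m + 1) + 1 = (2 * m + 2) + 1 from by ring, hrec]
            simp
          rw [h1, PowerSeries.coeff_mul,
            Finset.Nat.sum_antidiagonal_eq_sum_range_succ_mk]
          set F : ℕ → ℝ := fun k =>
            PowerSeries.coeff k u * PowerSeries.coeff (2 * m + 2 - k) u with hF
          have hsub : (Finset.range (m + 1)).image (fun a => 2 * a + 1) ⊆
              Finset.range ((2 * m + 2).succ) := by
            intro k hk
            simp only [mem_image, mem_range] at hk ⊢
            obtain ⟨a, ha, rfl⟩ := hk
            omega
          have hzero : ∀ k ∈ Finset.range ((2 * m + 2).succ),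
              k ∉ (Finset.range (m + 1)).image (fun a => 2 * a + 1) → F k = 0 := by
            intro k hk hknot
            simp only [mem_range, Nat.succ_eq_add_one] at hk
            rcases Nat.even_or_odd k with ⟨a, ha⟩ | ⟨a, ha⟩
            · rcases eq_or_lt_of_le (show a ≤ m + 1 from by omega) with h | h
              · have : 2 * m + 2 - k = 0 := by omega
                simp only [hF, this, h0, mul_zero]
              · have : PowerSeries.coeff k u = 0 := by
                  rw [show k = 2 * a from by omega]; exact (ih a (by omega)).1
                simp only [hF, this, zero_mul]
            · exfalso
              apply hknot
              simp only [mem_image, mem_range]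
              exact ⟨a, by omega, by omega⟩
          have hinj : ∀ x ∈ Finset.range (m + 1), ∀ y ∈ Finset.range (m + 1),
              2 * x + 1 = 2 * y + 1 → x = y := by intro x _ y _ h; omega
          have hs : ∑ k ∈ Finset.range ((2 * m + 2).succ), F k =
              ∑ a ∈ Finset.range (m + 1), F (2 * a + 1) :=
            (Finset.sum_subset hsub hzero).symm.trans (Finset.sum_image hinj)
          rw [hs]
          have hterm : ∀ a ∈ Finset.range (m + 1), F (2 * a + 1) =
              ((catalan a * catalan (m - a) : ℕ) : ℝ) * (A ^ (m + 2) * B ^ m) := by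
            intro a ha
            simp only [mem_range] at ha
            have ham : a ≤ m := by omega
            simp only [hF]
            rw [show 2 * m + 2 - (2 * a + 1) = 2 * (m - a) + 1 from by omega,
              (ih a (by omega)).2, (ih (m - a) (by omega)).2]
            push_cast
            calc ((catalan a : ℝ) * A ^ (a + 1) * B ^ a) *
                ((catalan (m - a) : ℝ) * A ^ (m - a + 1) * B ^ (m - a))
                = ((catalan a : ℝ) * (catalan (m - a) : ℝ)) *
                  (A ^ (a + 1) * A ^ (m - a + 1)) * (B ^ a * B ^ (m - a)) := by ring
              _ = ((catalan a : ℝ) * (catalan (m - a) : ℝ)) * (A ^ (m + 2) * B ^ m) := by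
                  rw [← pow_add, ← pow_add,
                    show a + 1 + (m - a + 1) = m + 2 from by omega,
                    show a + (m - a) = m from by omega]
                  ring
          rw [Finset.sum_congr rfl hterm, ← Finset.sum_mul, ← Nat.cast_sum]
          have hc : catalan (m + 1) = ∑ k ∈ Finset.range (m + 1),
              catalan k * catalan (m - k) := by
            rw [catalan_succ', Finset.Nat.sum_antidiagonal_eq_sum_range_succ_mk]
          rw [← hc]
          ring
  exact ⟨fun n => (key n).2, fun n => (key n).1⟩
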